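/- arXiv:1907.05005 — 4 statements merged into one kernel-verified Lean document; each statement's English description precedes it below -/
import Mathlib

section
/- Let θ ≥ 2 be an integer, let G be a simple graph, and let C be a cycle in G each of whose vertices has degree at most θ+1 in G. If X is any trajectory of the threshold-θ dynamics on G and at some time t one has X_t(v) = false for every vertex v of C, then X_s(v) = false for every s ≥ t and every vertex v of C. (Observation O1: a fully healthy cycle in a graph of maximum degree θ+1 remains healthy forever, since each of its vertices then has at most θ−1 infected neighbors.) -/
/-- A trajectory of the threshold-`θ` dynamics on a simple graph `G`: a vertex can only be
infected at time `t+1` if it had at least `θ` infected neighbors at time `t`. -/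
def IsThresholdTrajectory {V : Type*} (G : SimpleGraph V) (θ : ℕ) (X : ℕ → V → Bool) : Prop :=
  ∀ t v, X (t + 1) v = true →
    ∃ S : Finset V, θ ≤ S.card ∧ ∀ u ∈ S, G.Adj v u ∧ X t u = true

lemma support_getElem_eq_getVert {V : Type*} {G : SimpleGraph V} {u v : V} (p : G.Walk u v) :
    ∀ i (h : i < p.support.length), p.support[i] = p.getVert i := by
  induction p with
  | nil => intro i h; simp at h; subst h; simp
  | cons hadj q ih =>
    intro i h
    cases i with
    | zero => simp
    | succ j =>
      simp only [SimpleGraph.Walk.support_cons, SimpleGraph.Walk.getVert_cons_succ]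
      rw [List.getElem_cons_succ]
      exact ih j (by simpa [SimpleGraph.Walk.support_cons] using h)

lemma exists_two_neighbors {V : Type*} {G : SimpleGraph V} {u : V} {c : G.Walk u u}
    (hc : c.IsCycle) :
    ∃ a b, a ≠ b ∧ G.Adj u a ∧ G.Adj u b ∧ a ∈ c.support ∧ b ∈ c.support := by
  have hlen : 3 ≤ c.length := hc.three_le_length
  set n := c.length with hn
  refine ⟨c.getVert 1, c.getVert (n - 1), ?_, ?_, ?_, ?_, ?_⟩
  · -- distinctness via nodup of support tail
    intro hab
    have hnd : c.support.tail.Nodup := hc.2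
    have hsl : c.support.length = n + 1 := by simp [SimpleGraph.Walk.length_support, hn]
    have htl : c.support.tail.length = n := by
      rw [List.length_tail, hsl]; simp
    have h0 : (0 : ℕ) < c.support.tail.length := by omega
    have h1 : n - 2 < c.support.tail.length := by omega
    have e0 : c.support.tail[0] = c.getVert 1 := by
      rw [List.getElem_tail]
      exact support_getElem_eq_getVert c 1 (by omega)
    have e1 : c.support.tail[n-2] = c.getVert (n - 2 + 1) := by
      rw [List.getElem_tail]
      exact support_getElem_eq_getVert c (n - 2 + 1) (by omega)
    have : (0 : ℕ) = n - 2 := by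
      have := List.Nodup.getElem_inj_iff hnd (i := 0) (j := n - 2) (hi := h0) (hj := h1)
      apply this.mp
      rw [e0, e1, hab]
      congr 1
      omega
    omega
  · have := c.adj_getVert_succ (i := 0) (by omega)
    simpa using this
  · have := c.adj_getVert_succ (i := n - 1) (by omega)
    have hend : c.getVert (n - 1 + 1) = u := by
      have : n - 1 + 1 = n := by omega
      rw [this]; exact c.getVert_length
    rw [hend] at this
    exact this.symm
  · rw [SimpleGraph.Walk.mem_support_iff_exists_getVert]
    exact ⟨1, rfl, by omega⟩
  · rw [SimpleGraph.Walk.mem_support_iff_exists_getVert]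
    exact ⟨n - 1, rfl, by omega⟩

/-- **Observation O1.** A fully healthy cycle, each of whose vertices has degree at most `θ+1`
in `G`, remains healthy forever under the threshold-`θ` dynamics. -/
theorem healthy_cycle_stays_healthy {V : Type*} (G : SimpleGraph V)
    [inst : ∀ u : V, Fintype (G.neighborSet u)]
    (θ : ℕ) (hθ : 2 ≤ θ) {v : V} (w : G.Walk v v) (hw : w.IsCycle)
    (hdeg : ∀ u ∈ w.support, G.degree u ≤ θ + 1)
    (X : ℕ → V → Bool) (hX : IsThresholdTrajectory G θ X)
    (t : ℕ) (ht : ∀ u ∈ w.support, X t u = false) :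
    ∀ s, t ≤ s → ∀ u ∈ w.support, X s u = false := by
  classical
  intro s hs
  induction s with
  | zero =>
    have : t = 0 := Nat.le_zero.mp hs
    subst this; exact ht
  | succ m ih =>
    rcases Nat.lt_or_ge t (m + 1) with hlt | hge
    · have hm : t ≤ m := Nat.lt_succ_iff.mp hlt
      have ihm : ∀ u ∈ w.support, X m u = false := ih hm
      intro u hu
      by_contra hfalse
      have htrue : X (m + 1) u = true := by
        cases h : X (m + 1) u with
        | false => exact absurd h hfalse
        | true => rfl
      obtain ⟨S, hScard, hS⟩ := hX m u htrue
      -- two cycle-neighbors of u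
      have huc : u ∈ (w.rotate u hu).support := SimpleGraph.Walk.start_mem_support _
      obtain ⟨a, b, hab, hua, hub, ha, hb⟩ := exists_two_neighbors (hw.rotate hu)
      -- rotate support membership transfer to w.support
      have hmemw : ∀ x, x ∈ (w.rotate u hu).support → x ∈ w.support := by
        intro x hx
        have hperm := SimpleGraph.Walk.support_rotate w u hu
        rcases (SimpleGraph.Walk.mem_support_iff (w.rotate u hu)).mp hx with rfl | hx'
        · exact hu
        · have : x ∈ w.support.tail := (hperm.mem_iff).mp hx'
          exact List.mem_of_mem_tail this
      have haw : a ∈ w.support := hmemw a ha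
      have hbw : b ∈ w.support := hmemw b hb
      -- a, b not in S since they're healthy at m
      have haS : a ∉ S := fun h => by
        have := (hS a h).2
        rw [ihm a haw] at this; exact Bool.false_ne_true this
      have hbS : b ∉ S := fun h => by
        have := (hS b h).2
        rw [ihm b hbw] at this; exact Bool.false_ne_true this
      -- S ∪ {a, b} ⊆ neighborFinset u
      have hsub : insert a (insert b S) ⊆ G.neighborFinset u := by
        intro x hx
        rw [SimpleGraph.mem_neighborFinset]
        rcases Finset.mem_insert.mp hx with rfl | hx
        · exact hua
        rcases Finset.mem_insert.mp hx with rfl | hx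
        · exact hub
        · exact (hS x hx).1
      have hcard : θ + 2 ≤ (insert a (insert b S)).card := by
        rw [Finset.card_insert_of_notMem (by simp [hab, haS]),
          Finset.card_insert_of_notMem hbS]
        omega
      have hle := Finset.card_le_card hsub
      have hdegu := hdeg u hu
      rw [← SimpleGraph.card_neighborFinset_eq_degree] at hdegu
      omega
    · have : m + 1 = t := by omega
      rw [this]; exact ht
end

section
/- Conditional form of Theorem 1.1, part 1 (long survival): for every integer θ ≥ 2 and every ε ∈ (0,1) there exists a constant c = c(ε) > 0 with the following property. Let n be any positive integer and let G be any simple graph on n vertices such that every W ⊆ V with |W| ≥ ⌈(1−ε)n⌉ satisfies |W^{*θ}| ≥ ⌈(1−0.9ε)n⌉. Then for every p ≥ (1−ε)/(1−0.95ε), every initial set X₀ with |X₀| ≥ ⌈(1−ε)n⌉, and every τ ∈ ℕ, the threshold-θ contact process satisfies P( ∃ t ≤ τ with |X_t| < ⌈(1−ε)n⌉ ) ≤ τ · exp(−c n). In particular, taking τ = ⌊exp(c n / 2)⌋, the process maintains at least (1−ε)n infected vertices for exponentially long time with probability 1 − exp(−Θ(n)). -/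
set_option maxHeartbeats 1000000


open MeasureTheory ProbabilityTheory

/-- For `W ⊆ V`, `starSet G l W = W^{*l}` is the set of vertices having at least `l`
neighbors in `W`. -/
noncomputable def starSet {V : Type*} [Fintype V] (G : SimpleGraph V) (l : ℕ)
    (W : Finset V) : Finset V :=
  letI := Classical.dec
  Finset.univ.filter fun v => l ≤ (W.filter fun u => G.Adj v u).card

/-- The discrete-time threshold-`θ` contact process with infection probability `p` and initial
infected set `X0`, driven by the field `ω` of `[0,1]`-valued random variables:
`X_{t+1} = {v ∈ (X_t)^{*θ} : ω(t+1, v) ≤ p}`. -/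
noncomputable def tcp {V : Type*} [Fintype V] (G : SimpleGraph V) (θ : ℕ) (p : ℝ)
    (X0 : Finset V) (ω : ℕ × V → ℝ) : ℕ → Finset V
  | 0 => X0
  | t + 1 =>
      letI := Classical.dec
      (starSet G θ (tcp G θ p X0 ω t)).filter fun v => ω (t + 1, v) ≤ p

/-- `P` is the law of an i.i.d. field of Uniform`[0,1]` random variables indexed by `ℕ × V`,
i.e. the infinite product of uniform measures on `[0,1]`: the coordinate maps are independent
and each is uniformly distributed on `[0,1]`. -/
def IsIIDUniform {V : Type*} (P : Measure ((ℕ × V) → ℝ)) : Prop :=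
  IsProbabilityMeasure P ∧
    iIndepFun (fun (i : ℕ × V) (ω : (ℕ × V) → ℝ) => ω i) P ∧
    ∀ i : ℕ × V, P.map (fun ω => ω i) = volume.restrict (Set.Icc (0 : ℝ) 1)

namespace TCPAux


noncomputable def q0 (ε : ℝ) : ℝ := 0.05 * ε / (1 - 0.95 * ε)
noncomputable def Ac (ε : ℝ) : ℝ := q0 ε * (1 - 0.9 * ε)
noncomputable def Bc (ε : ℝ) : ℝ := 0.1 * ε
noncomputable def t0 (ε : ℝ) : ℝ := (Bc ε - Ac ε) / (Ac ε + Bc ε)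
noncomputable def cc (ε : ℝ) : ℝ := t0 ε * (Bc ε - Ac ε) / 2

variable {ε : ℝ}

lemma h95 (hε : ε ∈ Set.Ioo (0:ℝ) 1) : 0 < 1 - 0.95 * ε := by
  obtain ⟨h0, h1⟩ := hε; nlinarith

lemma h9 (hε : ε ∈ Set.Ioo (0:ℝ) 1) : 0 < 1 - 0.9 * ε := by
  obtain ⟨h0, h1⟩ := hε; nlinarith

lemma q0_pos (hε : ε ∈ Set.Ioo (0:ℝ) 1) : 0 < q0 ε :=
  div_pos (by nlinarith [hε.1]) (h95 hε)

lemma Ac_pos (hε : ε ∈ Set.Ioo (0:ℝ) 1) : 0 < Ac ε :=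
  mul_pos (q0_pos hε) (h9 hε)

lemma Bc_pos (hε : ε ∈ Set.Ioo (0:ℝ) 1) : 0 < Bc ε := by
  have := hε.1; unfold Bc; nlinarith

lemma Ac_lt_Bc (hε : ε ∈ Set.Ioo (0:ℝ) 1) : Ac ε < Bc ε := by
  obtain ⟨h0, h1⟩ := hε
  have h95' := h95 ⟨h0, h1⟩
  have hAc : Ac ε = 0.05 * ε * (1 - 0.9 * ε) / (1 - 0.95 * ε) := by
    unfold Ac q0; ring
  rw [hAc, div_lt_iff₀ h95']
  unfold Bc; nlinarith

lemma ABsum_le (hε : ε ∈ Set.Ioo (0:ℝ) 1) : Ac ε + Bc ε ≤ 2 * (1 - 0.9 * ε) := by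
  obtain ⟨h0, h1⟩ := hε
  have h2 := Ac_lt_Bc ⟨h0, h1⟩
  have : Bc ε = 0.1 * ε := rfl
  nlinarith

lemma t0_pos (hε : ε ∈ Set.Ioo (0:ℝ) 1) : 0 < t0 ε :=
  div_pos (sub_pos.2 (Ac_lt_Bc hε)) (by linarith [Ac_pos hε, Bc_pos hε])

lemma t0_lt_one (hε : ε ∈ Set.Ioo (0:ℝ) 1) : t0 ε < 1 := by
  have hs : 0 < Ac ε + Bc ε := by linarith [Ac_pos hε, Bc_pos hε]
  rw [t0, div_lt_one hs]
  linarith [Ac_pos hε]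

lemma cc_pos (hε : ε ∈ Set.Ioo (0:ℝ) 1) : 0 < cc ε := by
  unfold cc
  have h1 := t0_pos hε
  have h2 := Ac_lt_Bc hε
  nlinarith [mul_pos h1 (sub_pos.2 h2)]

lemma t0_mul (hε : ε ∈ Set.Ioo (0:ℝ) 1) : t0 ε * (Ac ε + Bc ε) = Bc ε - Ac ε := by
  have h1 := Ac_pos hε
  have h2 := Bc_pos hε
  rw [t0, div_mul_cancel₀ _ ((by linarith : (0:ℝ) < Ac ε + Bc ε).ne')]

/-- The core real-analysis estimate. -/
lemma chain (hε : ε ∈ Set.Ioo (0:ℝ) 1) {n k : ℕ} (hn : 0 < n)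
    (hk : (1 - 0.9 * ε) * n ≤ (k : ℝ)) {q : ℝ} (hq0 : 0 ≤ q) (hq : q ≤ q0 ε) :
    Real.exp (-(t0 ε) * ((k : ℝ) - (⌈(1 - ε) * n⌉₊ : ℝ) + 1)) *
      (1 + q * (Real.exp (t0 ε) - 1)) ^ k ≤ Real.exp (-(cc ε) * n) := by
  obtain ⟨hε0, hε1⟩ := hε
  have hεm : ε ∈ Set.Ioo (0:ℝ) 1 := ⟨hε0, hε1⟩
  set T := t0 ε with hT
  have hT0 : 0 < T := t0_pos hεm
  have hT1 : T < 1 := t0_lt_one hεm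
  have hE1 : 1 ≤ Real.exp T := Real.one_le_exp hT0.le
  set E := Real.exp T with hEdef
  have hqE : 0 ≤ q * (E - 1) := mul_nonneg hq0 (by linarith)
  have hb : (0:ℝ) < 1 + q * (E - 1) := by linarith
  -- rewrite power as exponential
  have hpow : (1 + q * (E - 1)) ^ k = Real.exp ((k : ℝ) * Real.log (1 + q * (E - 1))) := by
    rw [Real.exp_nat_mul, Real.exp_log hb]
  rw [hpow, ← Real.exp_add, Real.exp_le_exp]
  -- basic bounds
  have hlog : Real.log (1 + q * (E - 1)) ≤ q0 ε * (E - 1) := by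
    have h1 := Real.log_le_sub_one_of_pos hb
    have h2 : q * (E - 1) ≤ q0 ε * (E - 1) := by
      apply mul_le_mul_of_nonneg_right hq; linarith
    linarith
  have hEbd : E - 1 ≤ T / (1 - T) := by
    have h1 : -T + 1 ≤ Real.exp (-T) := Real.add_one_le_exp (-T)
    have h2 : Real.exp (-T) = E⁻¹ := by rw [hEdef, Real.exp_neg]
    have hEpos : 0 < E := Real.exp_pos T
    have h3 : (1 - T) * E ≤ 1 := by
      have h4 := mul_le_mul_of_nonneg_right (h2 ▸ h1) hEpos.le
      rw [inv_mul_cancel₀ hEpos.ne'] at h4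
      nlinarith [h4]
    rw [le_div_iff₀ (by linarith : (0:ℝ) < 1 - T)]
    nlinarith
  have hApos := Ac_pos hεm
  have hBpos := Bc_pos hεm
  have hABlt := Ac_lt_Bc hεm
  have hsum : 0 < Ac ε + Bc ε := by linarith
  have hTmul : T * (Ac ε + Bc ε) = Bc ε - Ac ε := t0_mul hεm
  have h9' := h9 hεm
  -- β bound : q0 (E-1) (1-0.9ε) ≤ (B-A)/2
  have h1T : (0:ℝ) < 1 - T := by linarith
  have hbeta : q0 ε * (E - 1) * (1 - 0.9 * ε) ≤ (Bc ε - Ac ε) / 2 := by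
    have hq0p := q0_pos hεm
    have hAc' : Ac ε = q0 ε * (1 - 0.9 * ε) := rfl
    have key : Ac ε * (T / (1 - T)) = (Bc ε - Ac ε) / 2 := by
      rw [mul_div_assoc', div_eq_div_iff h1T.ne' two_ne_zero]
      linear_combination hTmul
    calc q0 ε * (E - 1) * (1 - 0.9 * ε)
        ≤ q0 ε * (T / (1 - T)) * (1 - 0.9 * ε) := by
          apply mul_le_mul_of_nonneg_right _ h9'.le
          exact mul_le_mul_of_nonneg_left hEbd hq0p.le
      _ = Ac ε * (T / (1 - T)) := by rw [hAc']; ring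
      _ = (Bc ε - Ac ε) / 2 := key
  -- T - β ≥ 0
  have hTbeta : q0 ε * (E - 1) ≤ T := by
    have h1 : T * (1 - 0.9 * ε) ≥ (Bc ε - Ac ε) / 2 := by
      have hle : Ac ε + Bc ε ≤ 2 * (1 - 0.9 * ε) := ABsum_le hεm
      nlinarith
    nlinarith
  -- ceiling bounds
  have hM : (⌈(1 - ε) * n⌉₊ : ℝ) - 1 ≤ (1 - ε) * n := by
    have h1 : (0:ℝ) ≤ (1 - ε) * n := by
      have := Nat.cast_nonneg (α := ℝ) n; nlinarith
    have := Nat.ceil_lt_add_one h1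
    linarith
  have hk0 : (0:ℝ) ≤ (k : ℝ) := Nat.cast_nonneg k
  have hn0 : (0:ℝ) ≤ (n : ℝ) := Nat.cast_nonneg n
  set M := (⌈(1 - ε) * n⌉₊ : ℝ)
  set β := q0 ε * (E - 1) with hβdef
  have e1 : (k : ℝ) * Real.log (1 + q * (E - 1)) ≤ (k : ℝ) * β :=
    mul_le_mul_of_nonneg_left hlog hk0
  have e2 : -(T - β) * (k : ℝ) ≤ -(T - β) * ((1 - 0.9 * ε) * n) :=
    mul_le_mul_of_nonpos_left hk (by linarith)
  have e3 : T * (M - 1) ≤ T * ((1 - ε) * n) := mul_le_mul_of_nonneg_left hM hT0.le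
  have e4 : β * (1 - 0.9 * ε) * n ≤ (Bc ε - Ac ε) / 2 * n :=
    mul_le_mul_of_nonneg_right hbeta hn0
  have hfinal : ((Bc ε - Ac ε) / 2 - T * (0.1 * ε)) * n = -(cc ε) * n := by
    have h5 : (Bc ε - Ac ε) / 2 - T * (0.1 * ε) = -(cc ε) := by
      have hBc : Bc ε = 0.1 * ε := rfl
      rw [cc]; linear_combination (-(1:ℝ)/2) * hTmul + T * hBc
    rw [h5]
  linarith [e1, e2, e3, e4, hfinal]


variable {V : Type} [Fintype V]

/-- `tcp` at time `t` only depends on coordinates with time component `≤ t`. -/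
lemma tcp_congr (G : SimpleGraph V) (θ : ℕ) (p : ℝ) (X0 : Finset V)
    {ω ω' : ℕ × V → ℝ} : ∀ t : ℕ, (∀ i : ℕ × V, i.1 ≤ t → ω i = ω' i) →
    tcp G θ p X0 ω t = tcp G θ p X0 ω' t := by
  intro t
  induction t with
  | zero => intro _; rfl
  | succ t ih =>
    intro h
    show (starSet G θ (tcp G θ p X0 ω t)).filter _ = (starSet G θ (tcp G θ p X0 ω' t)).filter _
    rw [ih (fun i hi => h i (hi.trans (Nat.le_succ t)))]
    apply Finset.filter_congr
    intro v _
    rw [h (t+1, v) (le_refl _)]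

/-- Measurability of `{x | S.filter (fun v => f v x ≤ p) = A}`. -/
lemma meas_filterEq {Ω' : Type*} [MeasurableSpace Ω'] (p : ℝ)
    (f : V → Ω' → ℝ) (hf : ∀ v, Measurable (f v)) (S A : Finset V) :
    MeasurableSet {x | (S.filter fun v => f v x ≤ p) = A} := by
  classical
  have hset : {x | (S.filter fun v => f v x ≤ p) = A}
      = ⋂ v : V, {x | v ∈ A ↔ (v ∈ S ∧ f v x ≤ p)} := by
    ext x
    simp only [Set.mem_setOf_eq, Set.mem_iInter, Finset.ext_iff, Finset.mem_filter]
    exact ⟨fun h v => (h v).symm, fun h v => (h v).symm⟩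
  rw [hset]
  apply MeasurableSet.iInter
  intro v
  by_cases hA : v ∈ A <;> by_cases hS : v ∈ S
  · have : {x | v ∈ A ↔ (v ∈ S ∧ f v x ≤ p)} = {x | f v x ≤ p} := by
      ext x; simp [hA, hS]
    rw [this]; exact measurableSet_le (hf v) measurable_const
  · have : {x | v ∈ A ↔ (v ∈ S ∧ f v x ≤ p)} = ∅ := by
      ext x; simp [hA, hS]
    rw [this]; exact MeasurableSet.empty
  · have : {x | v ∈ A ↔ (v ∈ S ∧ f v x ≤ p)} = {x | f v x ≤ p}ᶜ := by
      ext x; simp [hA, hS]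
    rw [this]; exact (measurableSet_le (hf v) measurable_const).compl
  · have : {x | v ∈ A ↔ (v ∈ S ∧ f v x ≤ p)} = Set.univ := by
      ext x; simp [hA, hS]
    rw [this]; exact MeasurableSet.univ

lemma meas_cardLt {Ω' : Type*} [MeasurableSpace Ω'] (p : ℝ)
    (f : V → Ω' → ℝ) (hf : ∀ v, Measurable (f v)) (S : Finset V) (m : ℕ) :
    MeasurableSet {x | (S.filter fun v => f v x ≤ p).card < m} := by
  classical
  have hset : {x | (S.filter fun v => f v x ≤ p).card < m}
      = ⋃ (A : Finset V) (_ : A.card < m), {x | (S.filter fun v => f v x ≤ p) = A} := by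
    ext x
    simp only [Set.mem_setOf_eq, Set.mem_iUnion]
    constructor
    · intro h; exact ⟨_, h, rfl⟩
    · rintro ⟨A, hA, h⟩; rw [h]; exact hA
  rw [hset]
  exact MeasurableSet.iUnion fun A => MeasurableSet.iUnion fun _ => meas_filterEq p f hf S A

/-- Measurability of `{x | tcp G θ p X0 (g x) t = A}`. -/
lemma meas_tcp (G : SimpleGraph V) (θ : ℕ) (p : ℝ) (X0 : Finset V)
    {Ω' : Type*} [MeasurableSpace Ω'] (g : Ω' → (ℕ × V) → ℝ) (hg : Measurable g) :
    ∀ (t : ℕ) (A : Finset V), MeasurableSet {x | tcp G θ p X0 (g x) t = A} := by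
  classical
  intro t
  induction t with
  | zero =>
    intro A
    by_cases h : X0 = A
    · have : {x | tcp G θ p X0 (g x) 0 = A} = Set.univ := by
        ext x; simp [tcp, h]
      rw [this]; exact MeasurableSet.univ
    · have : {x | tcp G θ p X0 (g x) 0 = A} = ∅ := by
        ext x; simp [tcp, h]
      rw [this]; exact MeasurableSet.empty
  | succ t ih =>
    intro A
    have hset : {x | tcp G θ p X0 (g x) (t+1) = A}
        = ⋃ (B : Finset V), ({x | tcp G θ p X0 (g x) t = B} ∩
            {x | ((starSet G θ B).filter fun v => g x (t+1, v) ≤ p) = A}) := by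
      ext x
      simp only [Set.mem_setOf_eq, Set.mem_iUnion, Set.mem_inter_iff]
      constructor
      · intro h
        refine ⟨tcp G θ p X0 (g x) t, rfl, ?_⟩
        rw [← h]
        show _ = (starSet G θ (tcp G θ p X0 (g x) t)).filter _
        rw [Finset.filter_congr_decidable]
      · rintro ⟨B, hB, h⟩
        show (starSet G θ (tcp G θ p X0 (g x) t)).filter _ = A
        rw [hB, Finset.filter_congr_decidable]
        exact h
    rw [hset]
    apply MeasurableSet.iUnion
    intro B
    exact (ih B).inter
      (meas_filterEq p (fun v x => g x (t+1, v)) (fun v => (measurable_pi_apply _).comp hg)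
        (starSet G θ B) A)



open Real

/-- Per-step bound via Chernoff. -/
lemma step_bound {V : Type} [Fintype V] {ε : ℝ} (hε : ε ∈ Set.Ioo (0:ℝ) 1) {n : ℕ} (hn : 0 < n)
    {p : ℝ} (hp : (1 - ε) / (1 - 0.95 * ε) ≤ p)
    (P : Measure ((ℕ × V) → ℝ)) (hP : IsIIDUniform P)
    (T : ℕ) (S : Finset V) (hS : (1 - 0.9 * ε) * n ≤ (S.card : ℝ)) :
    P {ω | (S.filter fun v => ω (T, v) ≤ p).card < ⌈(1 - ε) * n⌉₊} ≤
      ENNReal.ofReal (Real.exp (-(cc ε) * n)) := by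
  classical
  obtain ⟨hprob, hind, hmarg⟩ := hP
  haveI := hprob
  obtain ⟨hε0, hε1⟩ := hε
  have hεm : ε ∈ Set.Ioo (0:ℝ) 1 := ⟨hε0, hε1⟩
  have h95' : 0 < 1 - 0.95 * ε := h95 hεm
  have hppos : 0 < p := lt_of_lt_of_le (div_pos (by linarith) h95') hp
  set m := ⌈(1 - ε) * (n:ℝ)⌉₊ with hm
  set q : ℝ := 1 - min p 1 with hqdef
  have hq_nonneg : 0 ≤ q := by
    have : min p 1 ≤ 1 := min_le_right _ _
    simp only [hqdef]; linarith
  have hq_le : q ≤ q0 ε := by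
    have hp1 : (1 - ε) / (1 - 0.95 * ε) ≤ 1 := by
      rw [div_le_one h95']; linarith
    have hmin : (1 - ε) / (1 - 0.95 * ε) ≤ min p 1 := le_min hp hp1
    have heq : 1 - (1 - ε) / (1 - 0.95 * ε) = q0 ε := by
      rw [q0, eq_div_iff h95'.ne', sub_mul, div_mul_cancel₀ _ h95'.ne']; ring
    simp only [hqdef]; linarith
  have hT0 := t0_pos hεm
  -- the failure indicators
  set X : ℕ × V → ((ℕ × V) → ℝ) → ℝ := fun i ω => if ω i ≤ p then 0 else 1 with hX
  have hXmeas : ∀ i, Measurable (X i) := fun i =>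
    Measurable.ite (measurableSet_le (measurable_pi_apply i) measurable_const)
      measurable_const measurable_const
  have hXind : iIndepFun X P := by
    exact hind.comp (fun i x => if x ≤ p then (0:ℝ) else 1)
      (fun i => Measurable.ite measurableSet_Iic measurable_const measurable_const)
  have hinj : Function.Injective (fun v : V => (T, v)) := fun a b h => congrArg Prod.snd h
  set s : Finset (ℕ × V) := S.map ⟨fun v => (T, v), hinj⟩ with hs
  -- counting identity
  have hcount : ∀ ω, (∑ i ∈ s, X i) ω
      = (S.card : ℝ) - ((S.filter fun v => ω (T, v) ≤ p).card : ℝ) := by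
    intro ω
    rw [Finset.sum_apply, hs, Finset.sum_map]
    have h1 : ∀ v ∈ S, X ((⟨fun v => (T, v), hinj⟩ : V ↪ ℕ × V) v) ω
        = if ¬ (ω (T, v) ≤ p) then (1:ℝ) else 0 := by
      intro v _
      simp only [hX, Function.Embedding.coeFn_mk]
      by_cases h : ω (T, v) ≤ p <;> simp [h]
    rw [Finset.sum_congr rfl h1, Finset.sum_boole]
    have h2 : ((S.filter fun v => ω (T, v) ≤ p).card : ℝ)
        + ((S.filter fun v => ¬ ω (T, v) ≤ p).card : ℝ) = (S.card : ℝ) := by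
      exact_mod_cast Finset.card_filter_add_card_filter_not
        (s := S) (p := fun v => ω (T, v) ≤ p)
    linarith
  -- event inclusion
  have hsub : {ω : (ℕ × V) → ℝ | (S.filter fun v => ω (T, v) ≤ p).card < m}
      ⊆ {ω | ((S.card : ℝ) - (m : ℝ) + 1) ≤ (∑ i ∈ s, X i) ω} := by
    intro ω hω
    simp only [Set.mem_setOf_eq] at hω ⊢
    rw [hcount ω]
    have h1 : ((S.filter fun v => ω (T, v) ≤ p).card : ℝ) + 1 ≤ (m : ℝ) := by
      exact_mod_cast hω
    linarith
  -- integrability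
  have hFmeas : Measurable (∑ i ∈ s, X i) := by
    have he : (∑ i ∈ s, X i) = fun ω => ∑ i ∈ s, X i ω := by
      funext ω; exact Finset.sum_apply ω s X
    rw [he]
    exact Finset.measurable_sum s (fun i _ => hXmeas i)
  have hFle : ∀ ω, (∑ i ∈ s, X i) ω ≤ (s.card : ℝ) := by
    intro ω
    rw [Finset.sum_apply]
    calc ∑ i ∈ s, X i ω ≤ ∑ _i ∈ s, (1:ℝ) := by
          apply Finset.sum_le_sum; intro i _
          simp only [hX]; split <;> norm_num
      _ = (s.card : ℝ) := by rw [Finset.sum_const, nsmul_eq_mul, mul_one]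
  have hInt : Integrable (fun ω => Real.exp (t0 ε * (∑ i ∈ s, X i) ω)) P := by
    refine Integrable.mono' (integrable_const (Real.exp (t0 ε * s.card)))
      ((Real.measurable_exp.comp (hFmeas.const_mul (t0 ε))).aestronglyMeasurable) ?_
    filter_upwards with ω
    rw [Real.norm_eq_abs, abs_of_pos (Real.exp_pos _), Real.exp_le_exp]
    exact mul_le_mul_of_nonneg_left (hFle ω) hT0.le
  -- Chernoff
  have hcher := measure_ge_le_exp_mul_mgf (μ := P) (X := ∑ i ∈ s, X i)
    ((S.card : ℝ) - (m : ℝ) + 1) hT0.le hInt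
  -- per-coordinate mgf
  have hmgf_one : ∀ i ∈ s, mgf (X i) P (t0 ε) = 1 + q * (Real.exp (t0 ε) - 1) := by
    intro i _
    set g : ℝ → ℝ := fun x => Real.exp (t0 ε * if x ≤ p then (0:ℝ) else 1) with hgdef
    have hgm : Measurable g :=
      Real.measurable_exp.comp
        ((Measurable.ite measurableSet_Iic measurable_const measurable_const).const_mul (t0 ε))
    have h1 : mgf (X i) P (t0 ε) = ∫ x, g x ∂(P.map (fun ω => ω i)) := by
      rw [integral_map (measurable_pi_apply i).aemeasurable hgm.aestronglyMeasurable]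
      rfl
    rw [h1, hmarg i]
    haveI : IsProbabilityMeasure (volume.restrict (Set.Icc (0:ℝ) 1)) := by
      constructor
      rw [Measure.restrict_apply_univ, Real.volume_Icc]
      norm_num
    have hIntg : Integrable g (volume.restrict (Set.Icc (0:ℝ) 1)) := by
      refine Integrable.mono' (integrable_const (Real.exp (t0 ε))) hgm.aestronglyMeasurable ?_
      filter_upwards with x
      rw [hgdef]
      simp only []
      rw [Real.norm_eq_abs, abs_of_pos (Real.exp_pos _), Real.exp_le_exp]
      split <;> nlinarith [hT0.le]
    rw [← integral_add_compl (measurableSet_Iic (a := p)) hIntg]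
    have hI1 : ∫ x in Set.Iic p, g x ∂(volume.restrict (Set.Icc (0:ℝ) 1)) = min p 1 := by
      rw [Measure.restrict_restrict measurableSet_Iic]
      have heq : Set.EqOn g (fun _ => (1:ℝ)) (Set.Iic p ∩ Set.Icc 0 1) := by
        intro x hx
        simp only [hgdef]
        rw [if_pos (show x ≤ p from hx.1), mul_zero, Real.exp_zero]
      rw [setIntegral_congr_fun (measurableSet_Iic.inter measurableSet_Icc) heq,
        setIntegral_const, smul_eq_mul, mul_one]
      have hs1 : Set.Iic p ∩ Set.Icc (0:ℝ) 1 = Set.Icc 0 (min p 1) := by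
        ext x
        simp only [Set.mem_inter_iff, Set.mem_Iic, Set.mem_Icc, le_min_iff]
        tauto
      rw [hs1, measureReal_def, Real.volume_Icc, sub_zero,
        ENNReal.toReal_ofReal (le_min hppos.le zero_le_one)]
    have hI2 : ∫ x in (Set.Iic p)ᶜ, g x ∂(volume.restrict (Set.Icc (0:ℝ) 1))
        = (ENNReal.ofReal (1 - p)).toReal * Real.exp (t0 ε) := by
      rw [Set.compl_Iic, Measure.restrict_restrict measurableSet_Ioi]
      have heq : Set.EqOn g (fun _ => Real.exp (t0 ε)) (Set.Ioi p ∩ Set.Icc 0 1) := by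
        intro x hx
        simp only [hgdef]
        rw [if_neg (not_le.mpr (show p < x from hx.1)), mul_one]
      rw [setIntegral_congr_fun (measurableSet_Ioi.inter measurableSet_Icc) heq,
        setIntegral_const, smul_eq_mul]
      have hs2 : Set.Ioi p ∩ Set.Icc (0:ℝ) 1 = Set.Ioc p 1 := by
        ext x
        simp only [Set.mem_inter_iff, Set.mem_Ioi, Set.mem_Icc, Set.mem_Ioc]
        constructor
        · rintro ⟨h1, _, h3⟩; exact ⟨h1, h3⟩
        · rintro ⟨h1, h2⟩; exact ⟨h1, le_trans hppos.le h1.le, h2⟩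
      rw [hs2, measureReal_def, Real.volume_Ioc]
    rw [hI1, hI2]
    rcases le_total p 1 with h | h
    · rw [ENNReal.toReal_ofReal (by linarith)]
      have : min p 1 = p := min_eq_left h
      rw [this]
      simp only [hqdef, this]
      ring
    · have h0 : (ENNReal.ofReal (1 - p)) = 0 := ENNReal.ofReal_eq_zero.mpr (by linarith)
      have h1 : min p 1 = 1 := min_eq_right h
      rw [h0, h1]
      simp [hqdef, h1]
  -- product mgf
  have hmgf : mgf (∑ i ∈ s, X i) P (t0 ε) = (1 + q * (Real.exp (t0 ε) - 1)) ^ S.card := by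
    rw [hXind.mgf_sum hXmeas s, Finset.prod_congr rfl hmgf_one, Finset.prod_const, hs,
      Finset.card_map]
  -- assemble
  have hchain := chain hεm hn (k := S.card) hS hq_nonneg hq_le
  have htoReal : (P {ω | (S.filter fun v => ω (T, v) ≤ p).card < m}).toReal
      ≤ Real.exp (-(cc ε) * n) := by
    calc (P {ω | (S.filter fun v => ω (T, v) ≤ p).card < m}).toReal
        ≤ (P {ω | ((S.card : ℝ) - (m : ℝ) + 1) ≤ (∑ i ∈ s, X i) ω}).toReal :=
          ENNReal.toReal_mono (measure_ne_top P _) (measure_mono hsub)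
      _ ≤ Real.exp (-(t0 ε) * ((S.card : ℝ) - (m : ℝ) + 1)) * mgf (∑ i ∈ s, X i) P (t0 ε) :=
          hcher
      _ = Real.exp (-(t0 ε) * ((S.card : ℝ) - (m : ℝ) + 1))
            * (1 + q * (Real.exp (t0 ε) - 1)) ^ S.card := by rw [hmgf]
      _ ≤ Real.exp (-(cc ε) * n) := hchain
  calc P {ω | (S.filter fun v => ω (T, v) ≤ p).card < m}
      = ENNReal.ofReal (P {ω | (S.filter fun v => ω (T, v) ≤ p).card < m}).toReal :=
        (ENNReal.ofReal_toReal (measure_ne_top P _)).symm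
    _ ≤ ENNReal.ofReal (Real.exp (-(cc ε) * n)) := ENNReal.ofReal_le_ofReal htoReal



end TCPAux

/-- Conditional form of Theorem 1.1, part 1 (long survival): on any graph whose sets of size at
least `⌈(1-ε)n⌉` `θ`-expand to size at least `⌈(1-0.9ε)n⌉`, the threshold-`θ` contact process
with `p ≥ (1-ε)/(1-0.95ε)` started from at least `⌈(1-ε)n⌉` infected vertices stays above
`⌈(1-ε)n⌉` infected vertices up to any time `τ`, except with probability at most `τ·exp(-cn)`. -/
theorem tcp_long_survival (θ : ℕ) (hθ : 2 ≤ θ) (ε : ℝ) (hε : ε ∈ Set.Ioo (0 : ℝ) 1) :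
    ∃ c > (0 : ℝ), ∀ (n : ℕ), 0 < n → ∀ (V : Type) (_ : Fintype V), Fintype.card V = n →
      ∀ G : SimpleGraph V,
        (∀ W : Finset V, ⌈(1 - ε) * n⌉₊ ≤ W.card → ⌈(1 - 0.9 * ε) * n⌉₊ ≤ (starSet G θ W).card) →
        ∀ p : ℝ, (1 - ε) / (1 - 0.95 * ε) ≤ p →
        ∀ X0 : Finset V, ⌈(1 - ε) * n⌉₊ ≤ X0.card →
        ∀ P : Measure ((ℕ × V) → ℝ), IsIIDUniform P → ∀ τ : ℕ,
          P {ω | ∃ t ≤ τ, (tcp G θ p X0 ω t).card < ⌈(1 - ε) * n⌉₊} ≤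
            ENNReal.ofReal ((τ : ℝ) * Real.exp (-c * n)) := by
  classical
  refine ⟨TCPAux.cc ε, TCPAux.cc_pos hε, ?_⟩
  intro n hn V instV hcard G hexp p hp X0 hX0 P hP τ
  obtain ⟨hprob, hind, hmarg⟩ := hP
  haveI := hprob
  have hPfull : IsIIDUniform P := ⟨hprob, hind, hmarg⟩
  set m := ⌈(1 - ε) * (n:ℝ)⌉₊ with hm
  set Et : ℕ → Set ((ℕ × V) → ℝ) := fun t =>
    {ω | m ≤ (tcp G θ p X0 ω t).card ∧ (tcp G θ p X0 ω (t+1)).card < m} with hEt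
  -- event inclusion
  have hincl : {ω : (ℕ × V) → ℝ | ∃ t ≤ τ, (tcp G θ p X0 ω t).card < m}
      ⊆ ⋃ t ∈ Finset.range τ, Et t := by
    rintro ω ⟨t, htτ, hlt⟩
    have hex : ∃ u, (tcp G θ p X0 ω u).card < m := ⟨t, hlt⟩
    have hu := Nat.find_spec hex
    have hu0 : Nat.find hex ≠ 0 := by
      intro h
      rw [h, show tcp G θ p X0 ω 0 = X0 from rfl] at hu
      omega
    obtain ⟨u, hue⟩ : ∃ u, Nat.find hex = u + 1 :=
      ⟨Nat.find hex - 1, (Nat.succ_pred_eq_of_ne_zero hu0).symm⟩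
    have hmin : ¬ (tcp G θ p X0 ω u).card < m := Nat.find_min hex (by omega)
    have huτ : Nat.find hex ≤ t := Nat.find_min' hex hlt
    rw [hue] at hu
    exact Set.mem_biUnion (Finset.mem_range.mpr (by omega)) ⟨Nat.le_of_not_lt hmin, hu⟩
  -- per-step bound
  have hstep : ∀ t : ℕ, P (Et t) ≤ ENNReal.ofReal (Real.exp (-(TCPAux.cc ε) * n)) := by
    intro t
    set cand : Finset (Finset V) := Finset.univ.filter (fun A => m ≤ A.card) with hcand
    set EA : Finset V → Set ((ℕ × V) → ℝ) := fun A =>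
      {ω | ((starSet G θ A).filter fun v => ω (t+1, v) ≤ p).card < m} with hEA
    have hdecomp : Et t ⊆ ⋃ A ∈ cand, ({ω | tcp G θ p X0 ω t = A} ∩ EA A) := by
      rintro ω ⟨h1, h2⟩
      refine Set.mem_biUnion (Finset.mem_filter.mpr ⟨Finset.mem_univ _, h1⟩) ⟨rfl, ?_⟩
      have hstep_eq : tcp G θ p X0 ω (t+1)
          = (starSet G θ (tcp G θ p X0 ω t)).filter (fun v => ω (t+1, v) ≤ p) := by
        show Finset.filter _ _ = _
        rw [Finset.filter_congr_decidable]
      show ((starSet G θ (tcp G θ p X0 ω t)).filter fun v => ω (t+1, v) ≤ p).card < m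
      rw [← hstep_eq]
      exact h2
    have hAbound : ∀ A ∈ cand, P ({ω | tcp G θ p X0 ω t = A} ∩ EA A)
        ≤ P {ω | tcp G θ p X0 ω t = A} * ENNReal.ofReal (Real.exp (-(TCPAux.cc ε) * n)) := by
      intro A hA
      set Sp : Finset (ℕ × V) := Finset.range (t+1) ×ˢ Finset.univ with hSp
      set Tf : Finset (ℕ × V) := {t+1} ×ˢ Finset.univ with hTf
      have hdisj : Disjoint Sp Tf := by
        rw [Finset.disjoint_left]
        intro i hiS hiT
        rw [hSp, Finset.mem_product, Finset.mem_range] at hiS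
        rw [hTf, Finset.mem_product, Finset.mem_singleton] at hiT
        omega
      have hIF := hind.indepFun_finset Sp Tf hdisj (fun i => measurable_pi_apply i)
      letI : MeasurableSpace (Finset V) := ⊤
      set ext : ((i : Sp) → ℝ) → ((ℕ × V) → ℝ) :=
        fun x i => if h : i ∈ Sp then x ⟨i, h⟩ else 0 with hext
      have hextmeas : Measurable ext := by
        apply measurable_pi_lambda
        intro i
        by_cases h : i ∈ Sp
        · simp only [hext, h, dif_pos]
          exact measurable_pi_apply _
        · simp only [hext, h, dif_neg, not_false_iff]
          exact measurable_const
      set φ : ((i : Sp) → ℝ) → Finset V := fun x => tcp G θ p X0 (ext x) t with hφ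
      have hφmeas : Measurable φ := by
        intro u _
        have huset : φ ⁻¹' u = ⋃ (A' : Finset V) (_ : A' ∈ u), {x | φ x = A'} := by
          ext x
          simp only [Set.mem_preimage, Set.mem_iUnion, Set.mem_setOf_eq]
          exact ⟨fun h => ⟨φ x, h, rfl⟩, fun ⟨A', hA', h⟩ => h ▸ hA'⟩
        rw [huset]
        exact MeasurableSet.iUnion fun A' => MeasurableSet.iUnion fun _ =>
          TCPAux.meas_tcp G θ p X0 ext hextmeas t A'
      set ψ : ((i : Tf) → ℝ) → (V → ℝ) :=
        fun y v => y ⟨(t+1, v), by simp [hTf, Finset.mem_product]⟩ with hψ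
      have hψmeas : Measurable ψ := measurable_pi_lambda _ (fun v => measurable_pi_apply _)
      have hIndep2 := hIF.comp hφmeas hψmeas
      have hcomp1 : ∀ ω : (ℕ × V) → ℝ, φ (fun i : Sp => ω i) = tcp G θ p X0 ω t := by
        intro ω
        apply TCPAux.tcp_congr
        intro i hi
        have hiS : i ∈ Sp := by
          rw [hSp]
          exact Finset.mem_product.mpr ⟨Finset.mem_range.mpr (Nat.lt_succ_of_le hi),
            Finset.mem_univ _⟩
        simp only [hext]
        rw [dif_pos hiS]
      set D : Set (V → ℝ) := {u | ((starSet G θ A).filter fun v => u v ≤ p).card < m} with hD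
      have hDmeas : MeasurableSet D :=
        TCPAux.meas_cardLt p (fun v (u : V → ℝ) => u v) (fun v => measurable_pi_apply v) (starSet G θ A) m
      have hkey := hIndep2.measure_inter_preimage_eq_mul (μ := P) {A} D
        MeasurableSpace.measurableSet_top hDmeas
      have hpre1 : (φ ∘ fun ω (i : Sp) => ω i) ⁻¹' {A} = {ω | tcp G θ p X0 ω t = A} := by
        ext ω
        simp only [Set.mem_preimage, Set.mem_singleton_iff, Function.comp_apply,
          Set.mem_setOf_eq, hcomp1 ω]
      have hpre2 : (ψ ∘ fun ω (i : Tf) => ω i) ⁻¹' D = EA A := rfl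
      rw [hpre1, hpre2] at hkey
      rw [hkey]
      apply mul_le_mul_right
      have hcardS : (1 - 0.9 * ε) * n ≤ ((starSet G θ A).card : ℝ) := by
        have h1 : ⌈(1 - 0.9 * ε) * (n:ℝ)⌉₊ ≤ (starSet G θ A).card :=
          hexp A (Finset.mem_filter.mp hA).2
        calc (1 - 0.9 * ε) * n ≤ (⌈(1 - 0.9 * ε) * (n:ℝ)⌉₊ : ℝ) := Nat.le_ceil _
          _ ≤ _ := Nat.cast_le.mpr h1
      exact TCPAux.step_bound hε hn hp P hPfull (t+1) (starSet G θ A) hcardS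
    calc P (Et t) ≤ P (⋃ A ∈ cand, ({ω | tcp G θ p X0 ω t = A} ∩ EA A)) :=
          measure_mono hdecomp
      _ ≤ ∑ A ∈ cand, P ({ω | tcp G θ p X0 ω t = A} ∩ EA A) :=
          measure_biUnion_finset_le cand _
      _ ≤ ∑ A ∈ cand, P {ω | tcp G θ p X0 ω t = A}
            * ENNReal.ofReal (Real.exp (-(TCPAux.cc ε) * n)) := Finset.sum_le_sum hAbound
      _ = (∑ A ∈ cand, P {ω | tcp G θ p X0 ω t = A})
            * ENNReal.ofReal (Real.exp (-(TCPAux.cc ε) * n)) := (Finset.sum_mul _ _ _).symm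
      _ ≤ 1 * ENNReal.ofReal (Real.exp (-(TCPAux.cc ε) * n)) := by
          apply mul_le_mul_left
          have hdisj2 : (cand : Set (Finset V)).PairwiseDisjoint
              (fun A => {ω : (ℕ × V) → ℝ | tcp G θ p X0 ω t = A}) := by
            intro A _ B _ hAB
            exact Set.disjoint_left.mpr fun ω h1 h2 => hAB (by rw [← h1, ← h2])
          have hmeas2 : ∀ A ∈ cand, MeasurableSet {ω : (ℕ × V) → ℝ | tcp G θ p X0 ω t = A} :=
            fun A _ => TCPAux.meas_tcp G θ p X0 (fun ω => ω) measurable_id t A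
          rw [← measure_biUnion_finset hdisj2 hmeas2]
          exact prob_le_one
      _ = ENNReal.ofReal (Real.exp (-(TCPAux.cc ε) * n)) := one_mul _
  calc P {ω | ∃ t ≤ τ, (tcp G θ p X0 ω t).card < m}
      ≤ P (⋃ t ∈ Finset.range τ, Et t) := measure_mono hincl
    _ ≤ ∑ t ∈ Finset.range τ, P (Et t) := measure_biUnion_finset_le _ _
    _ ≤ ∑ _t ∈ Finset.range τ, ENNReal.ofReal (Real.exp (-(TCPAux.cc ε) * n)) :=
        Finset.sum_le_sum (fun t _ => hstep t)
    _ = (τ : ENNReal) * ENNReal.ofReal (Real.exp (-(TCPAux.cc ε) * n)) := by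
        rw [Finset.sum_const, Finset.card_range, nsmul_eq_mul]
    _ = ENNReal.ofReal ((τ : ℝ) * Real.exp (-(TCPAux.cc ε) * n)) := by
        rw [ENNReal.ofReal_mul (Nat.cast_nonneg τ), ENNReal.ofReal_natCast]
end

section
/- Mean-field stable fixed point: for every integer θ ≥ 2 there exists p₀ ∈ (0,1) such that for every p ∈ (p₀, 1), the function f : [0,1] → ℝ defined by f(q) = p·q^θ·((θ+1) − θq) has a fixed point q* ∈ (0,1), i.e. f(q*) = q*, at which the derivative satisfies 0 ≤ f'(q*) = p·θ·(θ+1)·q*^{θ−1}·(1−q*) < 1 (a stable fixed point). -/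
/-- Mean-field stable fixed point: for every `θ ≥ 2` there is `p₀ ∈ (0,1)` such that for every
`p ∈ (p₀, 1)` the map `f(q) = p·q^θ·((θ+1) - θq)` has a fixed point `q* ∈ (0,1)` at which
`0 ≤ f'(q*) = p·θ·(θ+1)·q*^{θ-1}·(1-q*) < 1`. -/
theorem meanfield_stable_fixed_point (θ : ℕ) (hθ : 2 ≤ θ) :
    ∃ p₀ ∈ Set.Ioo (0 : ℝ) 1, ∀ p ∈ Set.Ioo p₀ (1 : ℝ),
      ∃ q ∈ Set.Ioo (0 : ℝ) 1,
        p * q ^ θ * ((θ + 1) - θ * q) = q ∧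
        deriv (fun x : ℝ => p * x ^ θ * ((θ + 1) - θ * x)) q =
          p * θ * (θ + 1) * q ^ (θ - 1) * (1 - q) ∧
        0 ≤ p * θ * (θ + 1) * q ^ (θ - 1) * (1 - q) ∧
        p * θ * (θ + 1) * q ^ (θ - 1) * (1 - q) < 1 := by
  have ht : (2 : ℝ) ≤ (θ : ℝ) := by exact_mod_cast hθ
  have hcast : ((θ - 1 : ℕ) : ℝ) = (θ : ℝ) - 1 := by
    push_cast [Nat.cast_sub (by omega : 1 ≤ θ)]; ring
  obtain ⟨t, ht_def⟩ : ∃ t : ℝ, (θ : ℝ) = t := ⟨_, rfl⟩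
  rw [ht_def] at ht hcast ⊢
  have ht0 : (0 : ℝ) < t := by linarith
  have ht2 : (0 : ℝ) < t ^ 2 := by positivity
  -- c is the argmax of x^(θ-1)((t+1)-t x) on [0,1]
  have hc0 : 0 < (t ^ 2 - 1) / t ^ 2 := by
    apply div_pos _ ht2; nlinarith
  have hc1 : (t ^ 2 - 1) / t ^ 2 < 1 := by
    rw [div_lt_one ht2]; linarith
  -- Bernoulli lower bound
  have hcase : (t ^ 2 - 1) / t ^ 2 = 1 + (-(1 / t ^ 2)) := by
    field_simp; ring
  have hBern : 1 + (θ - 1 : ℕ) * (-(1 / t ^ 2)) ≤ ((t ^ 2 - 1) / t ^ 2) ^ (θ - 1) := by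
    rw [hcase]
    refine one_add_mul_le_pow ?_ (θ - 1)
    have : 1 / t ^ 2 ≤ 1 := by
      rw [div_le_one ht2]; nlinarith
    linarith
  have hBern' : 1 - (t - 1) / t ^ 2 ≤ ((t ^ 2 - 1) / t ^ 2) ^ (θ - 1) := by
    rw [hcast] at hBern
    calc 1 - (t - 1) / t ^ 2 = 1 + (t - 1) * (-(1 / t ^ 2)) := by ring
    _ ≤ _ := hBern
  have hH1 : 1 < ((t ^ 2 - 1) / t ^ 2) ^ (θ - 1) * ((t + 1) / t) := by
    have e1 : 1 - (t - 1) / t ^ 2 = (t ^ 2 - t + 1) / t ^ 2 := by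
      field_simp; ring
    have h1 : t / (t + 1) < (t ^ 2 - t + 1) / t ^ 2 := by
      rw [div_lt_div_iff₀ (by linarith) ht2]; nlinarith
    have h2 : t / (t + 1) < ((t ^ 2 - 1) / t ^ 2) ^ (θ - 1) := by
      rw [← e1] at h1; exact lt_of_lt_of_le h1 hBern'
    have h3 : (0 : ℝ) < (t + 1) / t := by positivity
    calc (1 : ℝ) = (t / (t + 1)) * ((t + 1) / t) := by
          field_simp
    _ < ((t ^ 2 - 1) / t ^ 2) ^ (θ - 1) * ((t + 1) / t) :=
          mul_lt_mul_of_pos_right h2 h3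
  have hH0 : 0 < ((t ^ 2 - 1) / t ^ 2) ^ (θ - 1) * ((t + 1) / t) := by linarith
  refine ⟨1 / (((t ^ 2 - 1) / t ^ 2) ^ (θ - 1) * ((t + 1) / t)),
    ⟨by positivity, by rw [div_lt_one hH0]; exact hH1⟩, ?_⟩
  intro p hp
  obtain ⟨hp1, hp2⟩ := hp
  have hp0 : 0 < p := lt_trans (by positivity) hp1
  -- IVT for G x = p * x^(θ-1) * ((t+1) - t*x)
  have hGcont : ContinuousOn (fun x : ℝ => p * x ^ (θ - 1) * ((t + 1) - t * x))
      (Set.Icc ((t ^ 2 - 1) / t ^ 2) 1) := by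
    apply Continuous.continuousOn; fun_prop
  have hG1 : p * (1 : ℝ) ^ (θ - 1) * ((t + 1) - t * 1) < 1 := by
    have : p * (1 : ℝ) ^ (θ - 1) * ((t + 1) - t * 1) = p := by
      rw [one_pow]; ring
    rw [this]; exact hp2
  have hGc : 1 < p * ((t ^ 2 - 1) / t ^ 2) ^ (θ - 1) *
      ((t + 1) - t * ((t ^ 2 - 1) / t ^ 2)) := by
    have hDc : (t + 1) - t * ((t ^ 2 - 1) / t ^ 2) = (t + 1) / t := by
      field_simp; ring
    rw [hDc]
    calc (1 : ℝ) = (1 / (((t ^ 2 - 1) / t ^ 2) ^ (θ - 1) * ((t + 1) / t))) *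
          (((t ^ 2 - 1) / t ^ 2) ^ (θ - 1) * ((t + 1) / t)) :=
          (one_div_mul_cancel (ne_of_gt hH0)).symm
    _ < p * (((t ^ 2 - 1) / t ^ 2) ^ (θ - 1) * ((t + 1) / t)) :=
          mul_lt_mul_of_pos_right hp1 hH0
    _ = p * ((t ^ 2 - 1) / t ^ 2) ^ (θ - 1) * ((t + 1) / t) := by ring
  have hsub := intermediate_value_Ioo' (le_of_lt hc1) hGcont
  obtain ⟨q, hqmem, hGq⟩ := hsub ⟨hG1, hGc⟩
  obtain ⟨hqc, hq1⟩ := hqmem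
  have hq0 : 0 < q := lt_trans hc0 hqc
  have hkey : p * q ^ (θ - 1) * ((t + 1) - t * q) = 1 := hGq
  have hpow : q ^ θ = q ^ (θ - 1) * q := by
    conv_lhs => rw [show θ = (θ - 1) + 1 by omega]
    rw [pow_succ]
  have hqc' : t ^ 2 - 1 < q * t ^ 2 := by
    rw [div_lt_iff₀ ht2] at hqc
    linarith
  refine ⟨q, ⟨hq0, hq1⟩, ?_, ?_, ?_, ?_⟩
  · -- fixed point
    rw [hpow]
    linear_combination q * hkey
  · -- derivative
    have h1 : HasDerivAt (fun x : ℝ => x ^ θ) ((θ : ℝ) * q ^ (θ - 1)) q :=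
      hasDerivAt_pow θ q
    rw [ht_def] at h1
    have h2 : HasDerivAt (fun x : ℝ => (t + 1) - t * x) (-t) q := by
      simpa using ((hasDerivAt_id q).const_mul t).const_sub (t + 1)
    have h3 := (h1.const_mul p).mul h2
    have h4 : HasDerivAt (fun x : ℝ => p * x ^ θ * ((t + 1) - t * x))
        (p * t * (t + 1) * q ^ (θ - 1) * (1 - q)) q := by
      refine h3.congr_deriv ?_
      rw [hpow]
      ring
    exact h4.deriv
  · -- nonneg
    have hqp : 0 ≤ q ^ (θ - 1) := le_of_lt (pow_pos hq0 _)
    have h1q : 0 ≤ 1 - q := by linarith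
    have hfac : 0 ≤ p * t * (t + 1) * q ^ (θ - 1) := by positivity
    exact mul_nonneg hfac h1q
  · -- derivative < 1
    have hA : 0 < p * q ^ (θ - 1) := by positivity
    have hlin : t * (t + 1) * (1 - q) < (t + 1) - t * q := by nlinarith
    calc p * t * (t + 1) * q ^ (θ - 1) * (1 - q)
        = (p * q ^ (θ - 1)) * (t * (t + 1) * (1 - q)) := by ring
    _ < (p * q ^ (θ - 1)) * ((t + 1) - t * q) := mul_lt_mul_of_pos_left hlin hA
    _ = 1 := hkey
end

section
/- Combined binomial estimate (equation (2.19) of the paper): let θ ≥ 2 be an integer, d ≥ θ+2 an integer, and q ∈ [0, 4/(θ+3)] real. If Z is a binomial random variable with d trials and success probability q, then P( Z ≥ d − θ + 1 ) ≤ ( (θ+2) · q )³. -/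
/-- Tail bound: `∑_{j=m}^n C(n,j) q^j (1-q)^{n-j} ≤ C(n,m) q^m`. -/
lemma binomial_tail_le_choose_mul_pow (n m : ℕ) (hm : m ≤ n) (q : ℝ)
    (h0 : 0 ≤ q) (h1 : q ≤ 1) :
    ∑ j ∈ Finset.Icc m n, (n.choose j : ℝ) * q ^ j * (1 - q) ^ (n - j)
      ≤ (n.choose m : ℝ) * q ^ m := by
  have h1q : (0:ℝ) ≤ 1 - q := by linarith
  have key : ∀ j ∈ Finset.Icc m n,
      (n.choose j : ℝ) * q ^ j * (1 - q) ^ (n - j)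
        ≤ (n.choose m : ℝ) * q ^ m *
            (((n - m).choose (j - m) : ℝ) * q ^ (j - m) * (1 - q) ^ (n - m - (j - m))) := by
    intro j hj
    rw [Finset.mem_Icc] at hj
    obtain ⟨hmj, hjn⟩ := hj
    have hchoose : (n.choose j : ℝ) ≤ (n.choose m : ℝ) * ((n - m).choose (j - m) : ℝ) := by
      have := Nat.choose_mul (n := n) hmj
      have hpos : 1 ≤ j.choose m := Nat.one_le_iff_ne_zero.mpr
        (Nat.choose_pos hmj).ne'
      have : n.choose j ≤ n.choose m * (n - m).choose (j - m) := by
        calc n.choose j = n.choose j * 1 := (mul_one _).symm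
          _ ≤ n.choose j * j.choose m := Nat.mul_le_mul_left _ hpos
          _ = n.choose m * (n - m).choose (j - m) := Nat.choose_mul (n := n) hmj
      exact_mod_cast this
    have hq : q ^ j = q ^ m * q ^ (j - m) := by
      rw [← pow_add]; congr 1; omega
    have hsub : n - j = n - m - (j - m) := by omega
    rw [hq, hsub]
    have hqpow : (0:ℝ) ≤ q ^ m * q ^ (j - m) * (1 - q) ^ (n - m - (j - m)) := by positivity
    calc (n.choose j : ℝ) * (q ^ m * q ^ (j - m)) * (1 - q) ^ (n - m - (j - m))
        = (n.choose j : ℝ) * (q ^ m * q ^ (j - m) * (1 - q) ^ (n - m - (j - m))) := by ring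
      _ ≤ (n.choose m : ℝ) * ((n - m).choose (j - m) : ℝ) *
            (q ^ m * q ^ (j - m) * (1 - q) ^ (n - m - (j - m))) :=
          mul_le_mul_of_nonneg_right hchoose hqpow
      _ = (n.choose m : ℝ) * q ^ m *
            (((n - m).choose (j - m) : ℝ) * q ^ (j - m) * (1 - q) ^ (n - m - (j - m))) := by
          ring
  calc ∑ j ∈ Finset.Icc m n, (n.choose j : ℝ) * q ^ j * (1 - q) ^ (n - j)
      ≤ ∑ j ∈ Finset.Icc m n, (n.choose m : ℝ) * q ^ m *
          (((n - m).choose (j - m) : ℝ) * q ^ (j - m) * (1 - q) ^ (n - m - (j - m))) :=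
        Finset.sum_le_sum key
    _ = (n.choose m : ℝ) * q ^ m * ∑ j ∈ Finset.Icc m n,
          (((n - m).choose (j - m) : ℝ) * q ^ (j - m) * (1 - q) ^ (n - m - (j - m))) := by
        rw [Finset.mul_sum]
    _ = (n.choose m : ℝ) * q ^ m := by
        rw [show Finset.Icc m n = Finset.Ico m (n + 1) by rw [Finset.Ico_add_one_right_eq_Icc],
          Finset.sum_Ico_eq_sum_range]
        have hrange : n + 1 - m = (n - m) + 1 := by omega
        rw [hrange]
        have hsum : ∑ i ∈ Finset.range ((n - m) + 1),
            (((n - m).choose (m + i - m) : ℝ) * q ^ (m + i - m) *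
              (1 - q) ^ (n - m - (m + i - m))) = 1 := by
          have := add_pow q (1 - q) (n - m)
          simp only [add_sub_cancel, one_pow] at this
          calc ∑ i ∈ Finset.range ((n - m) + 1),
              (((n - m).choose (m + i - m) : ℝ) * q ^ (m + i - m) *
                (1 - q) ^ (n - m - (m + i - m)))
              = ∑ i ∈ Finset.range ((n - m) + 1),
                  q ^ i * (1 - q) ^ (n - m - i) * ((n - m).choose i : ℝ) := by
                apply Finset.sum_congr rfl
                intro i _
                have : m + i - m = i := by omega
                rw [this]; ring
            _ = 1 := this.symm
        rw [hsum, mul_one]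

/-- Key counting estimate: `C(θ+2+e, θ-1) * 4^e ≤ (θ+2)^3 * (θ+3)^e`. -/
lemma choose_pow_key (θ : ℕ) (hθ : 2 ≤ θ) :
    ∀ e : ℕ, (θ + 2 + e).choose (θ - 1) * 4 ^ e ≤ (θ + 2) ^ 3 * (θ + 3) ^ e := by
  intro e
  induction e with
  | zero =>
      simp only [pow_zero, mul_one, Nat.add_zero]
      have h1 : (θ + 2).choose (θ - 1) = (θ + 2).choose 3 := by
        have : θ - 1 = (θ + 2) - 3 := by omega
        rw [this, Nat.choose_symm (by omega)]
      rw [h1]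
      exact Nat.choose_le_pow (θ + 2) 3
  | succ e ih =>
      set n := θ + 2 + e with hn
      have hstep : (n + 1).choose (θ - 1) * 4 ≤ n.choose (θ - 1) * (θ + 3) := by
        have hid := Nat.choose_mul_succ_eq n (θ - 1)
        have hsub : n + 1 - (θ - 1) = e + 4 := by omega
        rw [hsub] at hid
        -- hid : n.choose (θ-1) * (n+1) = (n+1).choose (θ-1) * (e+4)
        have hmul : (n + 1).choose (θ - 1) * 4 * (e + 4) ≤ n.choose (θ - 1) * (θ + 3) * (e + 4) := by
          have h1 : (n + 1).choose (θ - 1) * 4 * (e + 4) = 4 * (n.choose (θ - 1) * (n + 1)) := by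
            rw [hid]; ring
          rw [h1]
          have h2 : 4 * (n + 1) ≤ (θ + 3) * (e + 4) := by
            have : n + 1 = θ + 3 + e := by omega
            rw [this]
            nlinarith [hθ]
          calc 4 * (n.choose (θ - 1) * (n + 1)) = n.choose (θ - 1) * (4 * (n + 1)) := by ring
            _ ≤ n.choose (θ - 1) * ((θ + 3) * (e + 4)) := Nat.mul_le_mul_left _ h2
            _ = n.choose (θ - 1) * (θ + 3) * (e + 4) := by ring
        exact Nat.le_of_mul_le_mul_right hmul (by omega)
      calc (θ + 2 + (e + 1)).choose (θ - 1) * 4 ^ (e + 1)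
          = ((n + 1).choose (θ - 1) * 4) * 4 ^ e := by
            rw [show θ + 2 + (e + 1) = n + 1 by omega]; ring
        _ ≤ (n.choose (θ - 1) * (θ + 3)) * 4 ^ e := Nat.mul_le_mul_right _ hstep
        _ = (n.choose (θ - 1) * 4 ^ e) * (θ + 3) := by ring
        _ ≤ ((θ + 2) ^ 3 * (θ + 3) ^ e) * (θ + 3) := Nat.mul_le_mul_right _ ih
        _ = (θ + 2) ^ 3 * (θ + 3) ^ (e + 1) := by ring

/-- Combined binomial estimate (equation (2.19) of the paper): for `θ ≥ 2`, `d ≥ θ+2` and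
`0 ≤ q ≤ 4/(θ+3)`, if `Z ~ Bin(d, q)` then `P(Z ≥ d-θ+1) ≤ ((θ+2)·q)³`. -/
theorem binomial_tail_combined (θ : ℕ) (hθ : 2 ≤ θ) (d : ℕ) (hd : θ + 2 ≤ d) (q : ℝ)
    (hq : q ∈ Set.Icc (0 : ℝ) (4 / ((θ : ℝ) + 3))) :
    (PMF.binomial (Real.toNNReal q)
        (Real.toNNReal_le_one.mpr (hq.2.trans (by
          rw [div_le_one (by positivity)]
          have h2 : (2 : ℝ) ≤ (θ : ℝ) := by exact_mod_cast hθ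
          linarith))) d).toMeasure
        {k : Fin (d + 1) | d - θ + 1 ≤ (k : ℕ)} ≤
      ENNReal.ofReal ((((θ : ℝ) + 2) * q) ^ 3) := by
  have h0 : 0 ≤ q := hq.1
  have hθR : (2 : ℝ) ≤ (θ : ℝ) := by exact_mod_cast hθ
  have hqle : q ≤ 4 / ((θ : ℝ) + 3) := hq.2
  have h1 : q ≤ 1 := by
    refine hqle.trans ?_
    rw [div_le_one (by positivity)]
    linarith
  set m := d - θ + 1 with hm
  set p := Real.toNNReal q with hp
  have hp1 : p ≤ 1 := Real.toNNReal_le_one.mpr h1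
  have hpq : ((p : NNReal) : ENNReal) = ENNReal.ofReal q := rfl
  -- real-valued binomial weight
  set f : ℕ → ℝ := fun j => (d.choose j : ℝ) * q ^ j * (1 - q) ^ (d - j) with hf
  have hfnn : ∀ j, 0 ≤ f j := by
    intro j
    exact mul_nonneg (mul_nonneg (Nat.cast_nonneg _) (pow_nonneg h0 _))
      (pow_nonneg (by linarith) _)
  -- the PMF value as ofReal
  have happ : ∀ k : Fin (d + 1),
      PMF.binomial p hp1 d k = ENNReal.ofReal (f (k : ℕ)) := by
    intro k
    rw [PMF.binomial_apply]
    simp only [Fin.val_last]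
    rw [hf]
    have h1p : 1 - ((p : NNReal) : ENNReal) = ENNReal.ofReal (1 - q) := by
      rw [hpq, ← ENNReal.ofReal_one, ← ENNReal.ofReal_sub _ h0]
    rw [h1p, hpq, ← ENNReal.ofReal_pow h0, ← ENNReal.ofReal_pow (by linarith),
      ← ENNReal.ofReal_natCast (d.choose (k : ℕ)),
      ← ENNReal.ofReal_mul (pow_nonneg h0 _),
      ← ENNReal.ofReal_mul (mul_nonneg (pow_nonneg h0 _) (pow_nonneg (by linarith) _))]
    congr 1
    ring
  -- compute the measure as a real sum
  have hmeas : (PMF.binomial p hp1 d).toMeasure {k : Fin (d + 1) | m ≤ (k : ℕ)}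
      = ENNReal.ofReal (∑ j ∈ Finset.Icc m d, f j) := by
    rw [PMF.toMeasure_apply_fintype]
    have hind : ∀ k : Fin (d + 1),
        Set.indicator {k : Fin (d + 1) | m ≤ (k : ℕ)} (PMF.binomial p hp1 d) k
          = if m ≤ (k : ℕ) then ENNReal.ofReal (f (k : ℕ)) else 0 := by
      intro k
      rw [Set.indicator_apply]
      simp only [Set.mem_setOf_eq, happ k]
    calc ∑ k : Fin (d + 1),
          Set.indicator {k : Fin (d + 1) | m ≤ (k : ℕ)} (PMF.binomial p hp1 d) k
        = ∑ k : Fin (d + 1), (if m ≤ (k : ℕ) then ENNReal.ofReal (f (k : ℕ)) else 0) := by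
          exact Finset.sum_congr rfl fun k _ => hind k
      _ = ∑ j ∈ Finset.range (d + 1), (if m ≤ j then ENNReal.ofReal (f j) else 0) :=
          Fin.sum_univ_eq_sum_range (fun j => if m ≤ j then ENNReal.ofReal (f j) else 0) (d + 1)
      _ = ∑ j ∈ (Finset.range (d + 1)).filter (fun j => m ≤ j), ENNReal.ofReal (f j) :=
          (Finset.sum_filter _ _).symm
      _ = ∑ j ∈ Finset.Icc m d, ENNReal.ofReal (f j) := by
          congr 1
          ext j
          simp only [Finset.mem_filter, Finset.mem_range, Finset.mem_Icc]
          omega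
      _ = ENNReal.ofReal (∑ j ∈ Finset.Icc m d, f j) :=
          (ENNReal.ofReal_sum_of_nonneg fun j _ => hfnn j).symm
  rw [hmeas]
  apply ENNReal.ofReal_le_ofReal
  -- main real inequality
  have hmd : m ≤ d := by omega
  have step1 : ∑ j ∈ Finset.Icc m d, f j ≤ (d.choose m : ℝ) * q ^ m :=
    binomial_tail_le_choose_mul_pow d m hmd q h0 h1
  refine step1.trans ?_
  -- rewrite choose via symmetry
  have hsymm : d.choose m = d.choose (θ - 1) := by
    have : m = d - (θ - 1) := by omega
    rw [this, Nat.choose_symm (by omega)]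
  set e := d - (θ + 2) with he
  have hme : m = 3 + e := by omega
  have hkey : (d.choose (θ - 1) : ℝ) * (4 / ((θ : ℝ) + 3)) ^ e ≤ ((θ : ℝ) + 2) ^ 3 := by
    have hnat := choose_pow_key θ hθ e
    have hde : θ + 2 + e = d := by omega
    rw [hde] at hnat
    have hcast : (d.choose (θ - 1) : ℝ) * 4 ^ e ≤ ((θ : ℝ) + 2) ^ 3 * ((θ : ℝ) + 3) ^ e := by
      have := (Nat.cast_le (α := ℝ)).mpr hnat
      push_cast at this
      convert this using 2 <;> norm_num
    have hpos : (0 : ℝ) < ((θ : ℝ) + 3) ^ e := by positivity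
    rw [div_pow, ← mul_div_assoc, div_le_iff₀ hpos]
    exact hcast
  have hqe : q ^ e ≤ (4 / ((θ : ℝ) + 3)) ^ e := pow_le_pow_left₀ h0 hqle e
  calc (d.choose m : ℝ) * q ^ m
      = (d.choose (θ - 1) : ℝ) * (q ^ 3 * q ^ e) := by rw [hsymm, hme, pow_add]
    _ = ((d.choose (θ - 1) : ℝ) * q ^ e) * q ^ 3 := by ring
    _ ≤ (((θ : ℝ) + 2) ^ 3) * q ^ 3 := by
        apply mul_le_mul_of_nonneg_right _ (by positivity)
        calc (d.choose (θ - 1) : ℝ) * q ^ e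
            ≤ (d.choose (θ - 1) : ℝ) * (4 / ((θ : ℝ) + 3)) ^ e :=
              mul_le_mul_of_nonneg_left hqe (by positivity)
          _ ≤ ((θ : ℝ) + 2) ^ 3 := hkey
    _ = (((θ : ℝ) + 2) * q) ^ 3 := by ring
end
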